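/- Let G be a finite vertex-transitive simple graph. Then for every x > 0, L(x,G) + 1 = I(x,G) · Z_G(x). -/

import Mathlib

open Filter Topology

/-- A self-avoiding walk from `o` in the graph `G`, encoded as the (nonempty) list of
visited vertices: it starts at `o`, consecutive vertices are adjacent, and no vertex is
visited more than once.  A list of length `k+1` corresponds to a walk with `k` edges. -/
def IsSAWFrom {V : Type*} (G : SimpleGraph V) (o : V) (l : List V) : Prop :=
  l.head? = some o ∧ l.Chain' G.Adj ∧ l.Nodup

/-- `sawCount G o k = |SAW_k(o,G)|`, the number of self-avoiding walks from `o` with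
exactly `k` edges. -/
noncomputable def sawCount {V : Type*} (G : SimpleGraph V) (o : V) (k : ℕ) : ℕ :=
  Nat.card {l : List V // IsSAWFrom G o l ∧ l.length = k + 1}

/-- The partition function `Z_{o,G}(x) = Σ_k |SAW_k(o,G)| x^k`.  Since a self-avoiding
walk in a graph on `|V|` vertices has at most `|V| - 1` edges, the sum over
`k < |V|` captures all nonzero terms. -/
noncomputable def sawZ {V : Type*} [Fintype V] (G : SimpleGraph V) (o : V) (x : ℝ) : ℝ :=
  ∑ k ∈ Finset.range (Fintype.card V), (sawCount G o k : ℝ) * x ^ k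

/-- The expected length `L(x,o,G) = Z_{o,G}(x)⁻¹ Σ_k k |SAW_k(o,G)| x^k`. -/
noncomputable def sawL {V : Type*} [Fintype V] (G : SimpleGraph V) (o : V) (x : ℝ) : ℝ :=
  (sawZ G o x)⁻¹ *
    ∑ k ∈ Finset.range (Fintype.card V), (k : ℝ) * (sawCount G o k : ℝ) * x ^ k

/-- The number of pairs `(ω, ω')` of self-avoiding walks from `o`, with `k` resp. `j`
edges, whose vertex sets intersect exactly in `{o}`. -/
noncomputable def sawPairCount {V : Type*} (G : SimpleGraph V) (o : V) (k j : ℕ) : ℕ :=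
  Nat.card {p : List V × List V //
    (IsSAWFrom G o p.1 ∧ p.1.length = k + 1) ∧
    (IsSAWFrom G o p.2 ∧ p.2.length = j + 1) ∧
    {v | v ∈ p.1 ∧ v ∈ p.2} = {o}}

/-- The trivial-intersection probability
`I(x,o,G) = Z_{o,G}(x)⁻² Σ x^{|ω|+|ω'|}`, summed over pairs of self-avoiding walks
from `o` whose vertex sets meet only in `o`. -/
noncomputable def sawI {V : Type*} [Fintype V] (G : SimpleGraph V) (o : V) (x : ℝ) : ℝ :=
  ((sawZ G o x) ^ 2)⁻¹ *
    ∑ k ∈ Finset.range (Fintype.card V), ∑ j ∈ Finset.range (Fintype.card V),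
      (sawPairCount G o k j : ℝ) * x ^ (k + j)

/-- The finite-graph critical exponent `γ(x,o,G) = log Z_{o,G}(x) / log (L(x,o,G) + 1)`. -/
noncomputable def sawGamma {V : Type*} [Fintype V] (G : SimpleGraph V) (o : V) (x : ℝ) : ℝ :=
  Real.log (sawZ G o x) / Real.log (sawL G o x + 1)

/-- A graph is vertex-transitive if its automorphism group acts transitively on vertices. -/
def SimpleGraph.VertexTransitive {V : Type*} (G : SimpleGraph V) : Prop :=
  ∀ u v : V, ∃ φ : G ≃g G, φ u = v

/-- A graph is `d`-regular: every vertex has exactly `d` neighbours. -/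
def SawRegular {V : Type*} (G : SimpleGraph V) (d : ℕ) : Prop :=
  ∀ v : V, Nat.card (G.neighborSet v) = d

/-- `(x n)` is super-critical for the rooted family `(G n, o n)`:
`liminf_n Z_{o_n, G_n}(x_n) = ∞`, i.e. `Z` tends to infinity. -/
def SawSuperCritical {V : ℕ → Type*} [∀ n, Fintype (V n)]
    (G : ∀ n, SimpleGraph (V n)) (o : ∀ n, V n) (x : ℕ → ℝ) : Prop :=
  Tendsto (fun n => sawZ (G n) (o n) (x n)) atTop atTop

/-- `(x n)` is sub-critical for the rooted family `(G n, o n)`: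
`limsup_n Z_{o_n, G_n}(x_n) < ∞`, i.e. the sequence of partition functions is bounded. -/
def SawSubCritical {V : ℕ → Type*} [∀ n, Fintype (V n)]
    (G : ∀ n, SimpleGraph (V n)) (o : ∀ n, V n) (x : ℕ → ℝ) : Prop :=
  BddAbove (Set.range fun n => sawZ (G n) (o n) (x n))

/-- `(x n)` is critical: for every `0 < ε < 1`, `(x n (1+ε))` is super-critical and
`(x n (1-ε))` is sub-critical. -/
def SawCritical {V : ℕ → Type*} [∀ n, Fintype (V n)]
    (G : ∀ n, SimpleGraph (V n)) (o : ∀ n, V n) (x : ℕ → ℝ) : Prop :=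
  ∀ ε : ℝ, 0 < ε → ε < 1 →
    SawSuperCritical G o (fun n => x n * (1 + ε)) ∧
    SawSubCritical G o (fun n => x n * (1 - ε))

/-- `Z_{K_n}(x)` for the complete graph `K_n` on `n` vertices, rooted at an arbitrary
vertex (all choices agree by symmetry); junk value `0` for `n = 0`. -/
noncomputable def completeZ (n : ℕ) (x : ℝ) : ℝ :=
  if h : 0 < n then sawZ (⊤ : SimpleGraph (Fin n)) ⟨0, h⟩ x else 0

/-- `L(x, K_n)` for the complete graph `K_n`; junk value `0` for `n = 0`. -/
noncomputable def completeL (n : ℕ) (x : ℝ) : ℝ :=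
  if h : 0 < n then sawL (⊤ : SimpleGraph (Fin n)) ⟨0, h⟩ x else 0

/-- `I(x, K_n)` for the complete graph `K_n`; junk value `0` for `n = 0`. -/
noncomputable def completeI (n : ℕ) (x : ℝ) : ℝ :=
  if h : 0 < n then sawI (⊤ : SimpleGraph (Fin n)) ⟨0, h⟩ x else 0

/-- `γ(x, K_n)` for the complete graph `K_n`; junk value `0` for `n = 0`. -/
noncomputable def completeGamma (n : ℕ) (x : ℝ) : ℝ :=
  if h : 0 < n then sawGamma (⊤ : SimpleGraph (Fin n)) ⟨0, h⟩ x else 0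

/-- A non-backtracking walk in `G`, encoded as the list of visited vertices:
consecutive vertices are adjacent and `ω_{j+2} ≠ ω_j` for all `j`. -/
def IsNBWalk {V : Type*} (G : SimpleGraph V) (l : List V) : Prop :=
  l.Chain' G.Adj ∧ ∀ i, i + 2 < l.length → l[i]? ≠ l[i + 2]?

/-- The number of non-backtracking walks of length `t` from `u` to `v`. -/
noncomputable def nbCount {V : Type*} (G : SimpleGraph V) (u v : V) (t : ℕ) : ℕ :=
  Nat.card {l : List V //
    IsNBWalk G l ∧ l.length = t + 1 ∧ l.head? = some u ∧ l.getLast? = some v}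

/-- `p_t(u,v)`: the number of non-backtracking walks of length `t` from `u` to `v`
divided by `d(d-1)^{t-1}`, i.e. the probability that the non-backtracking random walk
on a `d`-regular graph started at `u` is at `v` at time `t`. -/
noncomputable def nbProb {V : Type*} (G : SimpleGraph V) (d : ℕ) (u v : V) (t : ℕ) : ℝ :=
  (nbCount G u v t : ℝ) / (d * ((d : ℝ) - 1) ^ (t - 1))

/-- The mixing time of the non-backtracking random walk on the `d`-regular graph `G`
with `N` vertices: the least `t ≥ 1` with `|p_t(u,v) - 1/N| ≤ 1/(2N)` for all `u, v`. -/
noncomputable def nbMixingTime {V : Type*} [Fintype V] (G : SimpleGraph V) (d : ℕ) : ℕ :=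
  sInf {t : ℕ | 1 ≤ t ∧ ∀ u v : V,
    |nbProb G d u v t - 1 / (Fintype.card V : ℝ)| ≤ 1 / (2 * (Fintype.card V : ℝ))}

section Helpers

variable {V : Type*} {G : SimpleGraph V}

lemma saw_finite_aux [Finite V] (n : ℕ) (Q : List V → Prop)
    (h : ∀ l, Q l → l.length = n) : Finite {l : List V // Q l} := by
  have hs : {l : List V | Q l} ⊆ {l | l.length = n} := fun l hl => h l hl
  exact ((List.finite_length_eq V n).subset hs).to_subtype

lemma saw_pair_finite_aux [Finite V] (n m : ℕ) (Q : List V × List V → Prop)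
    (h : ∀ p, Q p → p.1.length = n ∧ p.2.length = m) :
    Finite {p : List V × List V // Q p} := by
  have hs : {p : List V × List V | Q p} ⊆
      {l : List V | l.length = n} ×ˢ {l : List V | l.length = m} :=
    fun p hp => ⟨(h p hp).1, (h p hp).2⟩
  exact (((List.finite_length_eq V n).prod (List.finite_length_eq V m)).subset hs).to_subtype

lemma saw_nat_card_sigma {ι : Type*} [Fintype ι] (f : ι → Type*) [∀ i, Finite (f i)] :
    Nat.card (Σ i, f i) = ∑ i, Nat.card (f i) := by
  classical
  letI : ∀ i, Fintype (f i) := fun i => Fintype.ofFinite (f i)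
  simp [Nat.card_eq_fintype_card]

lemma mem_map_iso (φ : G ≃g G) (a : V) (l : List V) : a ∈ l.map ⇑φ ↔ φ.symm a ∈ l := by
  simp only [List.mem_map]
  constructor
  · rintro ⟨b, hb, rfl⟩; simpa using hb
  · intro h; exact ⟨φ.symm a, h, by simp⟩

lemma isSAWFrom_map (φ : G ≃g G) {o : V} {l : List V} (h : IsSAWFrom G o l) :
    IsSAWFrom G (φ o) (l.map ⇑φ) := by
  obtain ⟨h1, h2, h3⟩ := h
  refine ⟨by rw [List.head?_map, h1]; rfl, ?_, h3.map φ.injective⟩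
  unfold List.Chain' at h2 ⊢
  rw [List.isChain_map]
  exact h2.imp fun a b hab => φ.map_adj_iff.mpr hab

lemma saw_map_map (φ : G ≃g G) (l : List V) : (l.map ⇑φ).map ⇑φ.symm = l := by
  have h : ⇑φ.symm ∘ ⇑φ = id := funext fun x => φ.symm_apply_apply x
  rw [List.map_map, h, List.map_id]

lemma sawCount_eq_of_iso (φ : G ≃g G) (o : V) (k : ℕ) :
    sawCount G o k = sawCount G (φ o) k := by
  apply Nat.card_congr
  refine ⟨fun l => ⟨l.1.map ⇑φ, isSAWFrom_map φ l.2.1, by simp [l.2.2]⟩,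
          fun l => ⟨l.1.map ⇑φ.symm, by have h2 := isSAWFrom_map φ.symm l.2.1; rwa [φ.symm_apply_apply] at h2, by simp [l.2.2]⟩,
          fun l => Subtype.ext (saw_map_map φ l.1), fun l => Subtype.ext ?_⟩
  show (l.1.map ⇑φ.symm).map ⇑φ = l.1
  have h : ⇑φ ∘ ⇑φ.symm = id := funext fun x => φ.apply_symm_apply x
  rw [List.map_map, h, List.map_id]

lemma inter_map_iso (φ : G ≃g G) (o : V) (a b : List V)
    (h : {v | v ∈ a ∧ v ∈ b} = {o}) :
    {v | v ∈ a.map ⇑φ ∧ v ∈ b.map ⇑φ} = {φ o} := by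
  ext w
  simp only [Set.mem_setOf_eq, mem_map_iso, Set.mem_singleton_iff]
  have hw := Set.ext_iff.mp h (φ.symm w)
  simp only [Set.mem_setOf_eq, Set.mem_singleton_iff] at hw
  rw [hw]
  constructor
  · intro h'; rw [← h']; simp
  · intro h'; rw [h']; simp

lemma sawPairCount_eq_of_iso (φ : G ≃g G) (o : V) (k j : ℕ) :
    sawPairCount G o k j = sawPairCount G (φ o) k j := by
  apply Nat.card_congr
  refine ⟨fun p => ⟨(p.1.1.map ⇑φ, p.1.2.map ⇑φ),
            ⟨isSAWFrom_map φ p.2.1.1, by simp [p.2.1.2]⟩,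
            ⟨isSAWFrom_map φ p.2.2.1.1, by simp [p.2.2.1.2]⟩,
            inter_map_iso φ o _ _ p.2.2.2⟩,
          fun p => ⟨(p.1.1.map ⇑φ.symm, p.1.2.map ⇑φ.symm),
            ⟨by have h2 := isSAWFrom_map φ.symm p.2.1.1; rwa [φ.symm_apply_apply] at h2, by simp [p.2.1.2]⟩,
            ⟨by have h2 := isSAWFrom_map φ.symm p.2.2.1.1; rwa [φ.symm_apply_apply] at h2, by simp [p.2.2.1.2]⟩,
            by have h2 := inter_map_iso φ.symm (φ o) p.1.1 p.1.2 p.2.2.2; rwa [φ.symm_apply_apply] at h2⟩,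
          fun p => Subtype.ext (Prod.ext (saw_map_map φ p.1.1) (saw_map_map φ p.1.2)), 
          fun p => Subtype.ext (Prod.ext ?_ ?_)⟩
  · show (p.1.1.map ⇑φ.symm).map ⇑φ = p.1.1
    have h : ⇑φ ∘ ⇑φ.symm = id := funext fun x => φ.apply_symm_apply x
    rw [List.map_map, h, List.map_id]
  · show (p.1.2.map ⇑φ.symm).map ⇑φ = p.1.2
    have h : ⇑φ ∘ ⇑φ.symm = id := funext fun x => φ.apply_symm_apply x
    rw [List.map_map, h, List.map_id]

end Helpers

section Counting

variable {V : Type*} {G : SimpleGraph V}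

def SAWList (G : SimpleGraph V) (m : ℕ) : Type _ :=
  {l : List V // l.Chain' G.Adj ∧ l.Nodup ∧ l.length = m + 1}

lemma saw_ne_nil {m : ℕ} {l : List V} (h : l.length = m + 1) : l ≠ [] := by
  intro h'; simp [h'] at h

def SAWList.hd {m : ℕ} (l : SAWList G m) : V := l.1.head (saw_ne_nil l.2.2.2)

def headFiberEquiv (m : ℕ) (v : V) :
    {l : SAWList G m // l.hd = v} ≃ {l : List V // IsSAWFrom G v l ∧ l.length = m + 1} where
  toFun l := ⟨l.1.1, ⟨by rw [List.head?_eq_head (saw_ne_nil l.1.2.2.2)]; exact congrArg some l.2,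
    l.1.2.1, l.1.2.2.1⟩, l.1.2.2.2⟩
  invFun l := ⟨⟨l.1, l.2.1.2.1, l.2.1.2.2, l.2.2⟩, by
    have h1 := l.2.1.1
    rw [List.head?_eq_head (saw_ne_nil l.2.2)] at h1
    exact Option.some_inj.mp h1⟩
  left_inv l := Subtype.ext (Subtype.ext rfl)
  right_inv l := Subtype.ext rfl

lemma card_sawList [Fintype V] (m : ℕ) :
    Nat.card (SAWList G m) = ∑ v : V, sawCount G v m := by
  classical
  haveI : Finite (SAWList G m) := saw_finite_aux (m + 1) _ (fun l h => h.2.2)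
  rw [← Nat.card_congr (Equiv.sigmaFiberEquiv (SAWList.hd (G := G) (m := m))),
    saw_nat_card_sigma]
  exact Finset.sum_congr rfl fun v _ => Nat.card_congr (headFiberEquiv m v)

end Counting
section Split

variable {V : Type*} {G : SimpleGraph V}

lemma saw_split {m i : ℕ} {l : List V} (hc : l.Chain' G.Adj) (hn : l.Nodup)
    (hl : l.length = m + 1) (hi : i < m + 1) {v : V} (hv : l[i]? = some v) :
    (IsSAWFrom G v (l.take (i+1)).reverse ∧ ((l.take (i+1)).reverse).length = i + 1) ∧
    (IsSAWFrom G v (l.drop i) ∧ (l.drop i).length = (m - i) + 1) ∧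
    {w | w ∈ (l.take (i+1)).reverse ∧ w ∈ l.drop i} = {v} := by
  have hi' : i < l.length := by omega
  have hv' : l[i]'hi' = v := by
    have h := List.getElem?_eq_getElem hi'
    rw [h] at hv; exact Option.some_inj.mp hv
  refine ⟨⟨⟨?_, ?_, ?_⟩, ?_⟩, ⟨⟨?_, ?_, ?_⟩, ?_⟩, ?_⟩
  · rw [List.head?_reverse, List.getLast?_eq_getElem?]
    have hlen : (l.take (i+1)).length = i + 1 := by rw [List.length_take]; omega
    rw [hlen]
    simpa using List.getElem?_take_of_succ.trans hv
  · exact List.isChain_reverse.mpr ((hc.take _).imp fun a b hab => hab.symm)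
  · exact List.nodup_reverse.mpr (hn.sublist (List.take_sublist _ _))
  · rw [List.length_reverse, List.length_take]; omega
  · rw [List.head?_drop]; exact hv
  · exact hc.drop i
  · exact hn.sublist (List.drop_sublist _ _)
  · rw [List.length_drop]; omega
  · have hnd := hn
    rw [← List.take_append_drop (i+1) l] at hnd
    have hdisj := (List.nodup_append.mp hnd).2.2
    have hdropcons : l.drop i = l[i]'hi' :: l.drop (i+1) := List.drop_eq_getElem_cons hi'
    ext w
    simp only [Set.mem_setOf_eq, List.mem_reverse, Set.mem_singleton_iff]
    constructor
    · rintro ⟨hw1, hw2⟩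
      rw [hdropcons] at hw2
      rcases List.mem_cons.mp hw2 with h | h
      · rw [h, hv']
      · exact absurd rfl (hdisj w hw1 w h)
    · rintro rfl
      refine ⟨?_, ?_⟩
      · rw [← hv']
        exact List.mem_of_getElem? (List.getElem?_take_of_succ.trans (List.getElem?_eq_getElem hi'))
      · rw [hdropcons, ← hv']
        exact List.mem_cons_self

lemma saw_glue {m i : ℕ} {v : V} {a b : List V}
    (ha : IsSAWFrom G v a) (hal : a.length = i + 1)
    (hb : IsSAWFrom G v b) (hbl : b.length = (m - i) + 1)
    (hi : i < m + 1)
    (hset : {w | w ∈ a ∧ w ∈ b} = {v}) :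
    (a.reverse ++ b.tail).Chain' G.Adj ∧ (a.reverse ++ b.tail).Nodup ∧
    (a.reverse ++ b.tail).length = m + 1 ∧ (a.reverse ++ b.tail)[i]? = some v := by
  obtain ⟨ha1, ha2, ha3⟩ := ha
  obtain ⟨hb1, hb2, hb3⟩ := hb
  have hbne : b ≠ [] := by intro h'; simp [h'] at hbl
  have hbhead : b.head hbne = v := by
    rw [List.head?_eq_head hbne] at hb1; exact Option.some_inj.mp hb1
  have hbcons : v :: b.tail = b := by rw [← hbhead]; exact List.cons_head_tail hbne
  have hvnb : v ∉ b.tail := by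
    have h := hb3; rw [← hbcons] at h; exact (List.nodup_cons.mp h).1
  have harl : a.reverse.length = i + 1 := by rw [List.length_reverse]; exact hal
  refine ⟨?_, ?_, ?_, ?_⟩
  · unfold List.Chain' at ha2 hb2 ⊢
    rw [List.isChain_append]
    refine ⟨List.isChain_reverse.mpr (ha2.imp fun x y hxy => hxy.symm), hb2.tail, ?_⟩
    intro x hx y hy
    rw [List.getLast?_reverse, ha1, Option.mem_def, Option.some_inj] at hx
    subst hx
    have hchain := hb2
    rw [← hbcons, List.isChain_cons] at hchain
    exact hchain.1 y hy
  · rw [List.nodup_append]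
    refine ⟨List.nodup_reverse.mpr ha3, hb3.sublist (List.tail_sublist b), ?_⟩
    intro w hw1 w' hw2 hne; subst hne
    rw [List.mem_reverse] at hw1
    have hwb : w ∈ b := List.mem_of_mem_tail hw2
    have := Set.ext_iff.mp hset w
    simp only [Set.mem_setOf_eq, Set.mem_singleton_iff] at this
    have hw : w = v := this.mp ⟨hw1, hwb⟩
    subst hw
    exact hvnb hw2
  · rw [List.length_append, harl, List.length_tail, hbl]; omega
  · rw [List.getElem?_append_left (by rw [harl]; omega),
      List.getElem?_reverse (by rw [hal]; omega), hal]
    have he : i + 1 - 1 - i = 0 := by omega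
    rw [he, ← List.head?_eq_getElem?]
    exact ha1

lemma saw_glue_take {i : ℕ} {a : List V} (b : List V) (hal : a.length = i + 1) :
    ((a.reverse ++ b).take (i+1)).reverse = a := by
  rw [List.take_left' (by rw [List.length_reverse]; exact hal), List.reverse_reverse]

lemma saw_glue_drop {i : ℕ} {v : V} {a b : List V} (hal : a.length = i + 1)
    (hbne : b ≠ []) (hbhead : b.head hbne = v)
    (hv : (a.reverse ++ b.tail)[i]? = some v) :
    (a.reverse ++ b.tail).drop i = b := by
  have hi' : i < (a.reverse ++ b.tail).length := by
    rw [List.length_append, List.length_reverse, hal]; omega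
  rw [List.drop_eq_getElem_cons hi', List.drop_left' (by rw [List.length_reverse]; exact hal)]
  have h := List.getElem?_eq_getElem hi'
  rw [h, Option.some_inj] at hv
  rw [hv, ← hbhead]
  exact List.cons_head_tail hbne

end Split
section Master

variable {V : Type*} {G : SimpleGraph V}

lemma saw_getElem_of_getElem? {l : List V} {n : ℕ} {v : V} (h : n < l.length)
    (hv : l[n]? = some v) : l[n] = v := by
  rw [List.getElem?_eq_getElem h, Option.some_inj] at hv; exact hv

def sawG (G : SimpleGraph V) (m : ℕ) : Fin (m+1) × SAWList G m → V × Fin (m+1) :=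
  fun x => (x.2.1[(x.1 : ℕ)]'(by rw [x.2.2.2.2]; exact x.1.isLt), x.1)

def gFiberEquiv (m : ℕ) (v : V) (i : Fin (m+1)) :
    {x : Fin (m+1) × SAWList G m // sawG G m x = (v, i)} ≃
    {p : List V × List V //
      (IsSAWFrom G v p.1 ∧ p.1.length = (i : ℕ) + 1) ∧
      (IsSAWFrom G v p.2 ∧ p.2.length = (m - (i : ℕ)) + 1) ∧
      {w | w ∈ p.1 ∧ w ∈ p.2} = {v}} where
  toFun x := ⟨((x.1.2.1.take ((i : ℕ)+1)).reverse, x.1.2.1.drop (i : ℕ)), by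
    have hgi : x.1.1 = i := congrArg Prod.snd x.2
    have hgv : x.1.2.1[(x.1.1 : ℕ)]? = some v := by
      have h1 : (sawG G m x.1).1 = v := congrArg Prod.fst x.2
      have h2 : x.1.2.1[(x.1.1 : ℕ)]? = some ((sawG G m x.1).1) :=
        List.getElem?_eq_getElem _
      rwa [h1] at h2
    rw [hgi] at hgv
    exact saw_split x.1.2.2.1 x.1.2.2.2.1 x.1.2.2.2.2 i.isLt hgv⟩
  invFun p := ⟨(i, ⟨p.1.1.reverse ++ p.1.2.tail, by
      have hg := saw_glue p.2.1.1 p.2.1.2 p.2.2.1.1 p.2.2.1.2 i.isLt p.2.2.2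
      exact ⟨hg.1, hg.2.1, hg.2.2.1⟩⟩), by
    have hg := saw_glue p.2.1.1 p.2.1.2 p.2.2.1.1 p.2.2.1.2 i.isLt p.2.2.2
    refine Prod.ext ?_ rfl
    exact saw_getElem_of_getElem? _ hg.2.2.2⟩
  left_inv x := by
    apply Subtype.ext
    have hgi : x.1.1 = i := congrArg Prod.snd x.2
    refine Prod.ext hgi.symm (Subtype.ext ?_)
    show ((x.1.2.1.take ((i : ℕ)+1)).reverse).reverse ++ (x.1.2.1.drop (i : ℕ)).tail = x.1.2.1
    rw [List.reverse_reverse, List.tail_drop, List.take_append_drop]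
  right_inv p := by
    obtain ⟨⟨a, b⟩, ⟨ha, hal⟩, ⟨hb, hbl⟩, hset⟩ := p
    have hbne : b ≠ [] := saw_ne_nil hbl
    have hbhead : b.head hbne = v := by
      have h1 := hb.1
      rw [List.head?_eq_head hbne] at h1
      exact Option.some_inj.mp h1
    have hg := saw_glue ha hal hb hbl i.isLt hset
    apply Subtype.ext
    exact Prod.ext (saw_glue_take b.tail hal) (saw_glue_drop hal hbne hbhead hg.2.2.2)

lemma saw_master [Fintype V] (G : SimpleGraph V) (m : ℕ) :
    (m + 1) * ∑ v : V, sawCount G v m =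
    ∑ v : V, ∑ i ∈ Finset.range (m + 1), sawPairCount G v i (m - i) := by
  classical
  haveI hfin : Finite (SAWList G m) := saw_finite_aux (m+1) _ (fun l h => h.2.2)
  have h2 : Nat.card (Fin (m+1) × SAWList G m)
      = ∑ q : V × Fin (m+1), sawPairCount G q.1 (q.2 : ℕ) (m - (q.2 : ℕ)) := by
    rw [← Nat.card_congr (Equiv.sigmaFiberEquiv (sawG G m)), saw_nat_card_sigma]
    exact Finset.sum_congr rfl fun q _ => Nat.card_congr (gFiberEquiv m q.1 q.2)
  have h1 : Nat.card (Fin (m+1) × SAWList G m) = (m+1) * ∑ v : V, sawCount G v m := by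
    rw [Nat.card_prod, Nat.card_eq_fintype_card, Fintype.card_fin, card_sawList]
  rw [← h1, h2, Fintype.sum_prod_type]
  exact Finset.sum_congr rfl fun v _ =>
    Fin.sum_univ_eq_sum_range (fun i => sawPairCount G v i (m - i)) (m+1)

end Master

section Final

variable {V : Type*} {G : SimpleGraph V}

lemma sawPairCount_eq_zero [Fintype V] (o : V) {k j : ℕ}
    (h : Fintype.card V < k + j + 1) : sawPairCount G o k j = 0 := by
  classical
  rw [sawPairCount, Nat.card_eq_zero]
  left
  refine ⟨?_⟩
  rintro ⟨⟨a, b⟩, ⟨ha, hal⟩, ⟨hb, hbl⟩, hset⟩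
  have hka : a.toFinset.card = k + 1 := by rw [List.toFinset_card_of_nodup ha.2.2, hal]
  have hkb : b.toFinset.card = j + 1 := by rw [List.toFinset_card_of_nodup hb.2.2, hbl]
  have hint : a.toFinset ∩ b.toFinset = {o} := by
    ext w
    simp only [Finset.mem_inter, List.mem_toFinset, Finset.mem_singleton]
    simpa using Set.ext_iff.mp hset w
  have hunion := Finset.card_union_add_card_inter a.toFinset b.toFinset
  rw [hka, hkb, hint, Finset.card_singleton] at hunion
  have hle := Finset.card_le_univ (a.toFinset ∪ b.toFinset)
  omega

lemma sawCount_zero (o : V) : sawCount G o 0 = 1 := by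
  rw [sawCount]
  have huniq : ∀ q : {l : List V // IsSAWFrom G o l ∧ l.length = 0 + 1}, q.1 = [o] := by
    rintro ⟨l, ⟨h1, _, _⟩, hlen⟩
    obtain ⟨a, rfl⟩ := List.length_eq_one_iff.mp hlen
    simp only [List.head?_cons, Option.some_inj] at h1
    subst h1
    rfl
  haveI : Unique {l : List V // IsSAWFrom G o l ∧ l.length = 0 + 1} :=
    { default := ⟨[o], ⟨rfl, List.isChain_singleton o, List.nodup_singleton o⟩, rfl⟩
      uniq := fun q => Subtype.ext (huniq q) }
  exact Nat.card_unique

lemma sawZ_pos [Fintype V] (o : V) {x : ℝ} (hx : 0 < x) : 0 < sawZ G o x := by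
  rw [sawZ]
  have hN : 0 < Fintype.card V := Fintype.card_pos_iff.mpr ⟨o⟩
  apply Finset.sum_pos'
  · intro k _; positivity
  · exact ⟨0, Finset.mem_range.mpr hN, by simp [sawCount_zero]⟩

lemma saw_key [Fintype V] (hG : G.VertexTransitive) (o : V) (m : ℕ) :
    (m + 1) * sawCount G o m = ∑ i ∈ Finset.range (m + 1), sawPairCount G o i (m - i) := by
  have hc : ∀ v : V, sawCount G v m = sawCount G o m := fun v => by
    obtain ⟨φ, hφ⟩ := hG v o
    have h := sawCount_eq_of_iso φ v m; rwa [hφ] at h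
  have hp : ∀ v : V, (∑ i ∈ Finset.range (m+1), sawPairCount G v i (m - i))
      = ∑ i ∈ Finset.range (m+1), sawPairCount G o i (m - i) := fun v => by
    refine Finset.sum_congr rfl fun i _ => ?_
    obtain ⟨φ, hφ⟩ := hG v o
    have h := sawPairCount_eq_of_iso φ v i (m - i); rwa [hφ] at h
  have hm := saw_master G m
  rw [Finset.sum_congr rfl (fun v _ => hc v), Finset.sum_congr rfl (fun v _ => hp v),
    Finset.sum_const, Finset.sum_const, smul_eq_mul, smul_eq_mul, Finset.card_univ] at hm
  have hN : 0 < Fintype.card V := Fintype.card_pos_iff.mpr ⟨o⟩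
  apply Nat.eq_of_mul_eq_mul_left hN
  rw [← hm]; ring

end Final

/-- For a finite vertex-transitive graph `G` and any `x > 0`,
`L(x,G) + 1 = I(x,G) · Z_G(x)`. -/
theorem saw_length_eq_intersection_mul_partition {V : Type*} [Fintype V]
    (G : SimpleGraph V) (hG : G.VertexTransitive) (o : V) (x : ℝ) (hx : 0 < x) :
    sawL G o x + 1 = sawI G o x * sawZ G o x := by
  classical
  have hZ : 0 < sawZ G o x := sawZ_pos o hx
  have key2 : ∑ k ∈ Finset.range (Fintype.card V),
        ((k : ℝ) + 1) * (sawCount G o k : ℝ) * x ^ k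
      = ∑ k ∈ Finset.range (Fintype.card V), ∑ j ∈ Finset.range (Fintype.card V),
        (sawPairCount G o k j : ℝ) * x ^ (k + j) := by
    have step1 : ∀ k : ℕ, ((k : ℝ) + 1) * (sawCount G o k : ℝ) * x ^ k
        = ∑ q ∈ Finset.HasAntidiagonal.antidiagonal k, (sawPairCount G o q.1 q.2 : ℝ) * x ^ (q.1 + q.2) := by
      intro k
      have h := saw_key hG o k
      have hcast : ((k : ℝ) + 1) * (sawCount G o k : ℝ)
          = ((∑ i ∈ Finset.range (k+1), sawPairCount G o i (k - i) : ℕ) : ℝ) := by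
        rw [← h]; push_cast; ring
      rw [Finset.Nat.sum_antidiagonal_eq_sum_range_succ_mk
        (fun q => (sawPairCount G o q.1 q.2 : ℝ) * x ^ (q.1 + q.2)) k]
      rw [hcast, Nat.cast_sum, Finset.sum_mul]
      refine Finset.sum_congr rfl fun i hi => ?_
      have hik : i + (k - i) = k := by
        have := Finset.mem_range.mp hi; omega
      simp [hik]
    rw [Finset.sum_congr rfl fun k _ => step1 k]
    have hdisj : (↑(Finset.range (Fintype.card V)) : Set ℕ).PairwiseDisjoint
        Finset.HasAntidiagonal.antidiagonal := by
      intro a _ b _ hab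
      simp only [Finset.disjoint_left]
      intro q hq hq'
      rw [Finset.HasAntidiagonal.mem_antidiagonal] at hq hq'
      exact hab (hq.symm.trans hq')
    rw [← Finset.sum_biUnion hdisj]
    have hbi : (Finset.range (Fintype.card V)).biUnion Finset.HasAntidiagonal.antidiagonal
        = (Finset.range (Fintype.card V) ×ˢ Finset.range (Fintype.card V)).filter
            (fun q => q.1 + q.2 < Fintype.card V) := by
      ext ⟨i, j⟩
      simp only [Finset.mem_biUnion, Finset.mem_range, Finset.HasAntidiagonal.mem_antidiagonal,
        Finset.mem_filter, Finset.mem_product]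
      constructor
      · rintro ⟨n, hn, hq⟩; omega
      · rintro ⟨⟨hi, hj⟩, hij⟩; exact ⟨i + j, hij, rfl⟩
    rw [hbi, ← Finset.sum_product']
    rw [Finset.sum_filter_of_ne]
    intro q hq hne
    by_contra hcon
    apply hne
    rw [sawPairCount_eq_zero o (by omega : Fintype.card V < q.1 + q.2 + 1)]
    simp
  have hAB : (∑ k ∈ Finset.range (Fintype.card V),
        (k : ℝ) * (sawCount G o k : ℝ) * x ^ k) + sawZ G o x
      = ∑ k ∈ Finset.range (Fintype.card V), ∑ j ∈ Finset.range (Fintype.card V),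
        (sawPairCount G o k j : ℝ) * x ^ (k + j) := by
    rw [← key2, sawZ, ← Finset.sum_add_distrib]
    exact Finset.sum_congr rfl fun k _ => by ring
  rw [sawL, sawI, ← hAB]
  have hxne : sawZ G o x ≠ 0 := hZ.ne'
  field_simp
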